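/- arXiv:1608.06077 — 5 statements merged into one kernel-verified Lean document; each statement's English description precedes it below -/
import Mathlib

section
/- Let L be a complex linear subspace of ℂ^m and let conj(L) denote its image under coordinatewise complex conjugation. Then the real dimension of the image of L under the real-linear projection Re : ℂ^m → ℝ^m (taking real parts coordinatewise) equals 2·dim_ℂ(L) − dim_ℂ(L ∩ conj(L)). -/
/-- The coordinatewise real-part map `ℂ^m → ℝ^m` as an `ℝ`-linear map. -/
noncomputable def reMap (m : ℕ) : (Fin m → ℂ) →ₗ[ℝ] (Fin m → ℝ) :=
  LinearMap.pi fun i => Complex.reLm.comp (LinearMap.proj i)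

/-- The image of a complex subspace `L ⊆ ℂ^m` under coordinatewise complex conjugation,
as a complex subspace (described as `{v | star v ∈ L}`, which equals `star '' L`). -/
noncomputable def conjSubmodule {m : ℕ} (L : Submodule ℂ (Fin m → ℂ)) :
    Submodule ℂ (Fin m → ℂ) where
  carrier := {v | star v ∈ L}
  add_mem' := by
    intro a b ha hb
    simpa [star_add] using L.add_mem ha hb
  zero_mem' := by simp
  smul_mem' := by
    intro c v hv
    simpa [star_smul] using L.smul_mem (star c) hv

/-- Rank-nullity for the restriction of a linear map to a submodule. -/
lemma finrank_map_add_finrank_inf_ker {K V W : Type*} [Field K] [AddCommGroup V]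
    [Module K V] [AddCommGroup W] [Module K W] [FiniteDimensional K V]
    (f : V →ₗ[K] W) (p : Submodule K V) :
    Module.finrank K (p.map f) + Module.finrank K (p ⊓ LinearMap.ker f : Submodule K V)
      = Module.finrank K p := by
  have h := LinearMap.finrank_range_add_finrank_ker (f.domRestrict p)
  rw [LinearMap.range_domRestrict] at h
  have hker : LinearMap.ker (f.domRestrict p)
      = Submodule.comap p.subtype (p ⊓ LinearMap.ker f) := by
    rw [LinearMap.ker_domRestrict, Submodule.comap_inf, Submodule.comap_subtype_self, top_inf_eq]
  rw [hker] at h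
  rw [← h, (Submodule.comapSubtypeEquivOfLe (inf_le_left :
      p ⊓ LinearMap.ker f ≤ p)).finrank_eq]

/-- Coordinatewise conjugation as an `ℝ`-linear map. -/
noncomputable def cMap (m : ℕ) : (Fin m → ℂ) →ₗ[ℝ] (Fin m → ℂ) :=
  LinearMap.pi fun i => Complex.conjAe.toLinearMap.comp (LinearMap.proj i)

lemma cMap_apply {m : ℕ} (v : Fin m → ℂ) : cMap m v = star v := by
  funext i; rfl

theorem stmt_0 {m : ℕ} (L : Submodule ℂ (Fin m → ℂ)) :
    Module.finrank ℝ ↥((L.restrictScalars ℝ).map (reMap m))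
      + Module.finrank ℂ ↥(L ⊓ conjSubmodule L) = 2 * Module.finrank ℂ ↥L := by
  classical
  set p := L.restrictScalars ℝ with hp
  -- rank-nullity for reMap on p
  have h1 := finrank_map_add_finrank_inf_ker (reMap m) p
  have hpL : Module.finrank ℝ p = 2 * Module.finrank ℂ L := by
    have := Module.finrank_mul_finrank ℝ ℂ ↥L
    rw [Complex.finrank_real_complex] at this
    exact this.symm ▸ rfl
  -- the kernel part: p ⊓ ker (reMap m) are the purely imaginary vectors of L
  set Kr : Submodule ℝ (Fin m → ℂ) := p ⊓ LinearMap.ker (reMap m) with hKr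
  set M : Submodule ℂ (Fin m → ℂ) := L ⊓ conjSubmodule L with hM
  set q : Submodule ℝ (Fin m → ℂ) := M.restrictScalars ℝ with hq
  -- membership characterizations
  have mem_ker : ∀ v : Fin m → ℂ, v ∈ LinearMap.ker (reMap m) ↔ ∀ i, (v i).re = 0 := by
    intro v
    constructor
    · intro h i
      have := congrFun (LinearMap.mem_ker.mp h) i
      simpa [reMap] using this
    · intro h
      apply LinearMap.mem_ker.mpr
      funext i
      simpa [reMap] using h i
  have mem_Kr : ∀ v : Fin m → ℂ, v ∈ Kr ↔ v ∈ L ∧ ∀ i, (v i).re = 0 := by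
    intro v
    rw [hKr, Submodule.mem_inf, mem_ker]
    exact Iff.rfl
  -- purely imaginary vectors satisfy star v = -v
  have star_eq_neg : ∀ v : Fin m → ℂ, (∀ i, (v i).re = 0) → star v = -v := by
    intro v h
    funext i
    have : (starRingEnd ℂ) (v i) = -(v i) := by
      apply Complex.ext <;> simp [h i]
    simpa using this
  -- Kr ⊆ q
  have Kr_le_q : Kr ≤ q := by
    intro v hv
    rw [mem_Kr] at hv
    obtain ⟨hL, him⟩ := hv
    refine Submodule.mem_inf.mpr ⟨hL, ?_⟩
    show star v ∈ L
    rw [star_eq_neg v him]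
    exact L.neg_mem hL
  -- the imaginary-part projection ψ
  set ψ : (Fin m → ℂ) →ₗ[ℝ] (Fin m → ℂ) := (2⁻¹ : ℝ) • (LinearMap.id - cMap m) with hψ
  have ψ_apply : ∀ v : Fin m → ℂ, ψ v = (2⁻¹ : ℝ) • (v - star v) := by
    intro v
    simp [hψ, cMap_apply]
  -- q.map ψ = Kr
  have hmap : q.map ψ = Kr := by
    apply le_antisymm
    · rintro _ ⟨v, hv, rfl⟩
      obtain ⟨hvL, hvc⟩ := Submodule.mem_inf.mp hv
      rw [mem_Kr, ψ_apply]
      constructor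
      · exact p.smul_mem _ (L.sub_mem hvL hvc)
      · intro i
        simp [Complex.smul_re]
    · intro w hw
      rw [mem_Kr] at hw
      obtain ⟨hwL, hwi⟩ := hw
      refine ⟨w, Kr_le_q ((mem_Kr w).mpr ⟨hwL, hwi⟩), ?_⟩
      rw [ψ_apply, star_eq_neg w hwi, sub_neg_eq_add, ← two_smul ℝ, smul_smul]
      norm_num
  -- q ⊓ ker ψ = real vectors of M
  set R : Submodule ℝ (Fin m → ℂ) := q ⊓ LinearMap.ker ψ with hR
  have mem_R : ∀ v : Fin m → ℂ, v ∈ R ↔ v ∈ M ∧ star v = v := by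
    intro v
    rw [hR, Submodule.mem_inf]
    constructor
    · rintro ⟨hv, hk⟩
      refine ⟨hv, ?_⟩
      have := LinearMap.mem_ker.mp hk
      rw [ψ_apply] at this
      have h2 : v - star v = 0 := by
        have := congrArg (fun w => (2 : ℝ) • w) this
        simpa [smul_smul] using this
      have := sub_eq_zero.mp h2
      exact this.symm
    · rintro ⟨hv, hs⟩
      refine ⟨hv, LinearMap.mem_ker.mpr ?_⟩
      rw [ψ_apply, hs]
      simp
  -- rank-nullity for ψ on q
  have h2 := finrank_map_add_finrank_inf_ker ψ q
  rw [hmap] at h2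
  -- R ≃ Kr via multiplication by i
  have hRK : Module.finrank ℝ R = Module.finrank ℝ Kr := by
    set ι : (Fin m → ℂ) →ₗ[ℝ] (Fin m → ℂ) :=
      { toFun := fun v => (Complex.I : ℂ) • v
        map_add' := by intro a b; simp [smul_add]
        map_smul' := by intro c v; funext i; simp; ring }
    have hinj : Function.Injective ι := by
      intro a b h
      have := congrArg (fun w => (-Complex.I : ℂ) • w) h
      simpa [smul_smul, ι, Complex.I_mul_I] using this
    have himg : R.map ι = Kr := by
      apply le_antisymm
      · rintro _ ⟨v, hv, rfl⟩
        rw [SetLike.mem_coe, mem_R] at hv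
        obtain ⟨hvM, hvs⟩ := hv
        rw [mem_Kr]
        constructor
        · exact L.smul_mem _ (Submodule.mem_inf.mp hvM).1
        · intro i
          have hre : (v i).im = 0 := by
            have := congrFun hvs i
            have h' : (starRingEnd ℂ) (v i) = v i := this
            have := congrArg Complex.im h'
            simp at this
            linarith
          show ((Complex.I • v) i).re = 0
          simp [hre]
      · intro w hw
        rw [mem_Kr] at hw
        obtain ⟨hwL, hwi⟩ := hw
        refine ⟨(-Complex.I : ℂ) • w, ?_, ?_⟩
        · rw [SetLike.mem_coe, mem_R]
          constructor
          · apply Submodule.mem_inf.mpr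
            constructor
            · exact L.smul_mem _ hwL
            · show star ((-Complex.I : ℂ) • w) ∈ L
              rw [star_smul, star_eq_neg w hwi]
              simpa using L.smul_mem (Complex.I : ℂ) hwL
          · rw [star_smul, star_eq_neg w hwi]
            simp
        · show (Complex.I : ℂ) • (-Complex.I : ℂ) • w = w
          rw [smul_smul]
          simp [Complex.I_mul_I]
    calc Module.finrank ℝ R = Module.finrank ℝ (R.map ι) :=
          (Submodule.equivMapOfInjective ι hinj R).finrank_eq
      _ = Module.finrank ℝ Kr := by rw [himg]
  -- finrank ℝ q = 2 * finrank ℂ M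
  have hqM : Module.finrank ℝ q = 2 * Module.finrank ℂ M := by
    have := Module.finrank_mul_finrank ℝ ℂ ↥M
    rw [Complex.finrank_real_complex] at this
    exact this.symm ▸ rfl
  -- combine: finrank Kr + finrank R = finrank q; finrank R = finrank Kr
  rw [hRK, hqM] at h2
  -- so 2 * finrank Kr = 2 * finrank M, hence finrank Kr = finrank M
  have hKrM : Module.finrank ℝ Kr = Module.finrank ℂ M := by omega
  rw [hpL] at h1
  rw [hM] at hKrM ⊢
  omega
end

section
/- Let f : ℝ^m → ℝ be a convex function, and let C, C′ ⊆ ℝ^m be open convex sets on which f is affine: f(x) = ⟨a, x⟩ + a₀ on C and f(x) = ⟨a′, x⟩ + a₀′ on C′. Suppose a vector v ∈ ℝ^m belongs to both recession cones, i.e. C + t v ⊆ C and C′ + t v ⊆ C′ for all t ≥ 0. Then ⟨a, v⟩ = ⟨a′, v⟩. -/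
open RealInnerProductSpace

/-- If a convex function agrees with an affine function on a nonempty open set,
then that affine function is a global minorant. -/
lemma aux_minorant {m : ℕ} (f : EuclideanSpace ℝ (Fin m) → ℝ)
    (hf : ConvexOn ℝ Set.univ f)
    (C : Set (EuclideanSpace ℝ (Fin m))) (hCo : IsOpen C)
    (a : EuclideanSpace ℝ (Fin m)) (a₀ : ℝ)
    (haff : ∀ x ∈ C, f x = ⟪a, x⟫ + a₀)
    (x : EuclideanSpace ℝ (Fin m)) (hx : x ∈ C)
    (y : EuclideanSpace ℝ (Fin m)) : ⟪a, y⟫ + a₀ ≤ f y := by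
  have hcont : Filter.Tendsto (fun ε : ℝ => x + ε • (y - x)) (nhdsWithin 0 (Set.Ioi 0)) (nhds x) := by
    have : Continuous (fun ε : ℝ => x + ε • (y - x)) := by continuity
    have h0 : (fun ε : ℝ => x + ε • (y - x)) 0 = x := by simp
    simpa [h0] using (this.continuousAt (x := (0:ℝ))).tendsto.mono_left nhdsWithin_le_nhds
  have hmem : ∀ᶠ ε in nhdsWithin 0 (Set.Ioi (0:ℝ)), x + ε • (y - x) ∈ C :=
    hcont.eventually_mem (hCo.mem_nhds hx)
  have hlt : ∀ᶠ ε : ℝ in nhdsWithin 0 (Set.Ioi (0:ℝ)), ε < 1 :=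
    (eventually_lt_nhds (by norm_num : (0:ℝ) < 1)).filter_mono nhdsWithin_le_nhds
  have hpos : ∀ᶠ ε : ℝ in nhdsWithin 0 (Set.Ioi (0:ℝ)), 0 < ε :=
    eventually_mem_nhdsWithin
  obtain ⟨ε, ⟨hεmem, hε1⟩, hε0⟩ := ((hmem.and hlt).and hpos).exists
  have hconv := hf.2 (Set.mem_univ x) (Set.mem_univ y)
    (by linarith : (0:ℝ) ≤ 1 - ε) hε0.le (by ring)
  have heq : (1 - ε) • x + ε • y = x + ε • (y - x) := by module
  rw [heq] at hconv
  have h1 : f (x + ε • (y - x)) = ⟪a, x⟫ + ε * (⟪a, y⟫ - ⟪a, x⟫) + a₀ := by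
    rw [haff _ hεmem, inner_add_right, real_inner_smul_right, inner_sub_right]
  have h2 : f x = ⟪a, x⟫ + a₀ := haff _ hx
  rw [h1, h2, smul_eq_mul, smul_eq_mul] at hconv
  nlinarith [hconv]

/-- One-sided slope comparison. -/
lemma aux_le {m : ℕ} (f : EuclideanSpace ℝ (Fin m) → ℝ)
    (hf : ConvexOn ℝ Set.univ f)
    (C C' : Set (EuclideanSpace ℝ (Fin m)))
    (hCo : IsOpen C) (hCne : C.Nonempty) (hC'ne : C'.Nonempty)
    (a a' : EuclideanSpace ℝ (Fin m)) (a₀ a₀' : ℝ)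
    (haff : ∀ x ∈ C, f x = ⟪a, x⟫ + a₀)
    (haff' : ∀ x ∈ C', f x = ⟪a', x⟫ + a₀')
    (v : EuclideanSpace ℝ (Fin m))
    (hv' : ∀ x ∈ C', ∀ t : ℝ, 0 ≤ t → x + t • v ∈ C') :
    ⟪a, v⟫ ≤ ⟪a', v⟫ := by
  obtain ⟨x, hx⟩ := hCne
  obtain ⟨x', hx'⟩ := hC'ne
  have key : ∀ t : ℝ, 0 ≤ t →
      ⟪a, x'⟫ + t * ⟪a, v⟫ + a₀ ≤ ⟪a', x'⟫ + t * ⟪a', v⟫ + a₀' := by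
    intro t ht
    have hmin := aux_minorant f hf C hCo a a₀ haff x hx (x' + t • v)
    have hmem := hv' x' hx' t ht
    have h1 : f (x' + t • v) = ⟪a', x'⟫ + t * ⟪a', v⟫ + a₀' := by
      rw [haff' _ hmem, inner_add_right, real_inner_smul_right]
    rw [inner_add_right, real_inner_smul_right, h1] at hmin
    linarith
  by_contra h
  push_neg at h
  set d := ⟪a, v⟫ - ⟪a', v⟫ with hd
  have hdpos : 0 < d := sub_pos.mpr h
  set K := ⟪a', x'⟫ + a₀' - ⟪a, x'⟫ - a₀ with hK
  have ht : (0:ℝ) ≤ (|K| + 1) / d := by positivity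
  have := key ((|K| + 1) / d) ht
  have habs : K ≤ |K| := le_abs_self K
  have hmul : (|K| + 1) / d * d = |K| + 1 := div_mul_cancel₀ _ (ne_of_gt hdpos)
  nlinarith [this]

/-- If a convex function is affine on two open convex sets whose recession cones both contain a
vector `v`, then the two affine pieces have the same directional derivative in direction `v`. -/
theorem stmt_6 {m : ℕ} (f : EuclideanSpace ℝ (Fin m) → ℝ)
    (hf : ConvexOn ℝ Set.univ f)
    (C C' : Set (EuclideanSpace ℝ (Fin m)))
    (hCo : IsOpen C) (hCc : Convex ℝ C) (hCne : C.Nonempty)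
    (hC'o : IsOpen C') (hC'c : Convex ℝ C') (hC'ne : C'.Nonempty)
    (a a' : EuclideanSpace ℝ (Fin m)) (a₀ a₀' : ℝ)
    (haff : ∀ x ∈ C, f x = ⟪a, x⟫ + a₀)
    (haff' : ∀ x ∈ C', f x = ⟪a', x⟫ + a₀')
    (v : EuclideanSpace ℝ (Fin m))
    (hv : ∀ x ∈ C, ∀ t : ℝ, 0 ≤ t → x + t • v ∈ C)
    (hv' : ∀ x ∈ C', ∀ t : ℝ, 0 ≤ t → x + t • v ∈ C') :
    ⟪a, v⟫ = ⟪a', v⟫ :=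
  le_antisymm
    (aux_le f hf C C' hCo hCne hC'ne a a' a₀ a₀' haff haff' v hv')
    (aux_le f hf C' C hC'o hC'ne hCne a' a a₀' a₀ haff' haff v hv)
end

section
/- Let f : ℝ^m → ℝ be a convex function and define G = {ξ ∈ ℝ^m : the function x ↦ f(x) − ⟨ξ, x⟩ is bounded from below on ℝ^m}. Let D = {ξ ∈ ℝ^m : ∃ x₀, f(x) − f(x₀) ≥ ⟨ξ, x − x₀⟩ for all x} be the union of all subdifferentials of f. Then D ⊆ G and the interior of G is contained in D. -/
open RealInnerProductSpace

/-- For a convex `f : ℝ^m → ℝ`, the union `D` of all subdifferentials of `f` is contained in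
the set `G` of `ξ` for which `f - ⟨ξ,·⟩` is bounded below, and the interior of `G` is
contained in `D`. -/
theorem stmt_9 {m : ℕ} (f : EuclideanSpace ℝ (Fin m) → ℝ)
    (hf : ConvexOn ℝ Set.univ f) :
    ({ξ | ∃ x₀, ∀ x, f x - f x₀ ≥ ⟪ξ, x - x₀⟫} ⊆
        {ξ | BddBelow (Set.range fun x => f x - ⟪ξ, x⟫)}) ∧
      interior {ξ | BddBelow (Set.range fun x => f x - ⟪ξ, x⟫)} ⊆
        {ξ | ∃ x₀, ∀ x, f x - f x₀ ≥ ⟪ξ, x - x₀⟫} := by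
  constructor
  · rintro ξ ⟨x₀, hx₀⟩
    refine ⟨f x₀ - ⟪ξ, x₀⟫, ?_⟩
    rintro y ⟨x, rfl⟩
    have h := hx₀ x
    rw [inner_sub_right] at h
    show f x₀ - ⟪ξ, x₀⟫ ≤ f x - ⟪ξ, x⟫
    linarith
  · intro ξ hξ
    have hfc : Continuous f := hf.locallyLipschitz.continuous
    obtain ⟨ε, hε, hball⟩ := Metric.isOpen_iff.1 isOpen_interior ξ hξ
    have hG : ∀ ζ ∈ Metric.ball ξ ε, BddBelow (Set.range fun x => f x - ⟪ζ, x⟫) := by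
      intro ζ hζ
      have h2 := hball.trans
        (interior_subset (s := {ξ | BddBelow (Set.range fun x => f x - ⟪ξ, x⟫)}))
      exact h2 hζ
    set g : EuclideanSpace ℝ (Fin m) → ℝ := fun x => f x - ⟪ξ, x⟫ with hgdef
    have hgc : Continuous g := hfc.sub (continuous_const.inner continuous_id)
    rcases Nat.eq_zero_or_pos m with hm | hm
    · subst hm
      refine ⟨0, fun x => ?_⟩
      have hx : x = 0 := Subsingleton.elim _ _
      simp [hx]
    · -- for each coordinate, a lower bound on g x - (ε/2) * |x i|
      have hc : ∀ i : Fin m, ∃ c : ℝ, ∀ x, c ≤ g x - ε / 2 * |x i| := by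
        intro i
        have hmem : ∀ s : ℝ, |s| = ε / 2 →
            ξ + s • EuclideanSpace.single i (1 : ℝ) ∈ Metric.ball ξ ε := by
          intro s hs
          rw [Metric.mem_ball, dist_eq_norm, add_sub_cancel_left, norm_smul,
            EuclideanSpace.norm_single, norm_one, mul_one, Real.norm_eq_abs, hs]
          linarith
        obtain ⟨c₁, hc₁⟩ := hG _ (hmem (ε / 2) (by rw [abs_of_pos]; linarith))
        obtain ⟨c₂, hc₂⟩ := hG _ (hmem (-(ε / 2)) (by rw [abs_neg, abs_of_pos]; linarith))
        refine ⟨min c₁ c₂, fun x => ?_⟩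
        have h1 := hc₁ (Set.mem_range_self x)
        have h2 := hc₂ (Set.mem_range_self x)
        rw [inner_add_left, real_inner_smul_left, EuclideanSpace.inner_single_left] at h1 h2
        simp only [map_one, one_mul] at h1 h2
        rcases abs_cases (x i) with ⟨habs, _⟩ | ⟨habs, _⟩
        · calc min c₁ c₂ ≤ c₁ := min_le_left _ _
            _ ≤ g x - ε / 2 * |x i| := by
              rw [habs]
              show c₁ ≤ f x - ⟪ξ, x⟫ - ε / 2 * x i
              linarith
        · calc min c₁ c₂ ≤ c₂ := min_le_right _ _
            _ ≤ g x - ε / 2 * |x i| := by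
              rw [habs]
              show c₂ ≤ f x - ⟪ξ, x⟫ - ε / 2 * -x i
              linarith
      choose c hcLow using hc
      haveI : Nonempty (Fin m) := ⟨⟨0, hm⟩⟩
      have hne : (Finset.univ : Finset (Fin m)).Nonempty := Finset.univ_nonempty
      set C : ℝ := Finset.univ.inf' hne c with hC
      have hCle : ∀ x (i : Fin m), C ≤ g x - ε / 2 * |x i| := fun x i =>
        le_trans (Finset.inf'_le c (Finset.mem_univ i)) (hcLow i x)
      -- sublevel set
      set K : Set (EuclideanSpace ℝ (Fin m)) := {x | g x ≤ g 0} with hK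
      have hK0 : (0 : EuclideanSpace ℝ (Fin m)) ∈ K := le_refl (g 0)
      set r : ℝ := 2 * (g 0 - C) / ε with hr
      have hr0 : 0 ≤ r := by
        have h := hCle 0 ⟨0, hm⟩
        have h0 : |(0 : EuclideanSpace ℝ (Fin m)) ⟨0, hm⟩| = 0 := by simp
        rw [h0, mul_zero] at h
        rw [hr]
        apply div_nonneg _ hε.le
        linarith
      have hKbd : K ⊆ Metric.closedBall 0 (Real.sqrt (m * r ^ 2)) := by
        intro x hx
        have hxi : ∀ i, |x i| ≤ r := by
          intro i
          have h1 := hCle x i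
          have h2 : g x ≤ g 0 := hx
          rw [hr, le_div_iff₀ hε]
          have h5 : ε / 2 * |x i| ≤ g x - C := by linarith [h1]
          have h4 : g x - C ≤ g 0 - C := by linarith [h2]
          have h3 : ε / 2 * |x i| ≤ g 0 - C := h5.trans h4
          calc |x i| * ε = 2 * (ε / 2 * |x i|) := by ring
            _ ≤ 2 * (g 0 - C) := by linarith
        rw [Metric.mem_closedBall, dist_zero_right, EuclideanSpace.norm_eq]
        apply Real.sqrt_le_sqrt
        calc (∑ i, ‖x i‖ ^ 2) ≤ ∑ _i : Fin m, r ^ 2 := by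
              apply Finset.sum_le_sum
              intro i _
              have := hxi i
              rw [Real.norm_eq_abs]
              nlinarith [abs_nonneg (x i)]
          _ = m * r ^ 2 := by simp [mul_comm]
      have hKclosed : IsClosed K := isClosed_le hgc continuous_const
      have hKcompact : IsCompact K :=
        (Metric.isCompact_of_isClosed_isBounded hKclosed
          ((Metric.isBounded_closedBall).subset hKbd))
      obtain ⟨x₀, hx₀K, hx₀min⟩ :=
        hKcompact.exists_isMinOn ⟨0, hK0⟩ hgc.continuousOn
      refine ⟨x₀, fun x => ?_⟩
      have hgmin : g x₀ ≤ g x := by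
        rcases le_or_gt (g x) (g 0) with h | h
        · exact hx₀min h
        · exact le_trans (hx₀min hK0) h.le
      simp only [hgdef] at hgmin
      rw [ge_iff_le, inner_sub_right]
      linarith
end

section
/- Let f : ℝ^m → ℝ be a convex function, v ∈ ℝ^m, and suppose that on an open convex set of the form K + x₀ (with K an open cone and x₀ ∈ ℝ^m) the function f is affine with linear part a, i.e. f(y) = ⟨a, y⟩ + b for y ∈ K + x₀. Then for every u ∈ K, every y ∈ ℝ^m, and every subgradient ξ of f at y, one has ⟨ξ, u⟩ ≤ ⟨a, u⟩. -/
open RealInnerProductSpace Pointwise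

/-- If a convex `f` is affine with linear part `a` on a translated open convex cone `K + x₀`,
then every subgradient `ξ` of `f` (at any point) satisfies `⟨ξ,u⟩ ≤ ⟪a,u⟫` for all `u ∈ K`. -/
theorem stmt_10 {m : ℕ} (f : EuclideanSpace ℝ (Fin m) → ℝ)
    (hf : ConvexOn ℝ Set.univ f)
    (K : Set (EuclideanSpace ℝ (Fin m)))
    (hKo : IsOpen K) (hKne : K.Nonempty) (hKconv : Convex ℝ K)
    (hKcone : ∀ t : ℝ, 0 < t → t • K = K)
    (x₀ a : EuclideanSpace ℝ (Fin m)) (b : ℝ)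
    (haff : ∀ k ∈ K, f (k + x₀) = ⟪a, k + x₀⟫ + b) :
    ∀ u ∈ K, ∀ y ξ, (∀ z, f z - f y ≥ ⟪ξ, z - y⟫) → ⟪ξ, u⟫ ≤ ⟪a, u⟫ := by
  intro u hu y ξ hsub
  by_contra hlt
  push_neg at hlt
  set δ : ℝ := ⟪ξ, u⟫ - ⟪a, u⟫ with hδ
  have hδpos : 0 < δ := sub_pos.mpr hlt
  obtain ⟨ε, hεpos, hball⟩ := Metric.isOpen_iff.mp hKo u hu
  set C : ℝ := ⟪a, y⟫ + b - f y with hC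
  set t : ℝ := max (‖y - x₀‖ / ε + 1) ((|C| + 1) / δ) with ht
  have ht1 : ‖y - x₀‖ / ε + 1 ≤ t := le_max_left _ _
  have ht2 : (|C| + 1) / δ ≤ t := le_max_right _ _
  have htpos : 0 < t := lt_of_lt_of_le (by positivity) ht1
  -- membership of the shifted point in K
  have hmem : u + (1 / t) • (y - x₀) ∈ K := by
    apply hball
    rw [Metric.mem_ball, dist_eq_norm]
    have : u + (1 / t) • (y - x₀) - u = (1 / t) • (y - x₀) := by abel
    rw [this, norm_smul]
    have h1 : ‖y - x₀‖ / ε < t := lt_of_lt_of_le (by linarith [div_nonneg (norm_nonneg (y - x₀)) hεpos.le]) ht1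
    have h2 : ‖y - x₀‖ < t * ε := (div_lt_iff₀ hεpos).mp h1
    rw [norm_div, norm_one, Real.norm_of_nonneg htpos.le]
    calc 1 / t * ‖y - x₀‖ < 1 / t * (t * ε) := by
          apply mul_lt_mul_of_pos_left h2 (by positivity)
      _ = ε := by field_simp
  have hmem2 : t • (u + (1 / t) • (y - x₀)) ∈ K := by
    rw [← hKcone t htpos]
    exact Set.smul_mem_smul_set hmem
  have heq : t • (u + (1 / t) • (y - x₀)) = t • u + (y - x₀) := by
    rw [smul_add, smul_smul]
    field_simp
    rw [one_smul]
  rw [heq] at hmem2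
  have hzeq : (t • u + (y - x₀)) + x₀ = y + t • u := by abel
  have hfz : f (y + t • u) = ⟪a, y + t • u⟫ + b := by
    rw [← hzeq]; exact haff _ hmem2
  have hsub' := hsub (y + t • u)
  have hdiff : y + t • u - y = t • u := by abel
  rw [hdiff, hfz] at hsub'
  rw [inner_add_right, inner_smul_right, inner_smul_right] at hsub'
  -- hsub' : ⟪a,y⟫ + t * ⟪a,u⟫ + b - f y ≥ t * ⟪ξ,u⟫
  have hkey : t * δ ≤ C := by
    rw [hδ, hC]; ring_nf; ring_nf at hsub'; linarith
  have : |C| + 1 ≤ t * δ := by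
    rw [div_le_iff₀ hδpos] at ht2; linarith [mul_comm t δ]
  linarith [le_abs_self C]
end

section
/- Let f : ℝ^m → ℝ be a convex function, let C ⊆ ℝ^m be a nonempty open convex set on which f is affine with gradient a (f(x) = ⟨a,x⟩ + b on C), let N ⊆ ℝ^m be a compact convex set containing the image of the subdifferential of f, with a ∈ N, and let v ∈ ℝ^m be such that ⟨ξ, v⟩ ≤ ⟨a, v⟩ for every ξ ∈ N (i.e., v ∈ norm_N(a)). If moreover f(y) ≥ ⟨a,y⟩ + b for all y ∈ ℝ^m, then f(x + t v) = ⟨a, x + t v⟩ + b for every x ∈ C and every t ≥ 0. -/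
open RealInnerProductSpace

/-- Every convex function on a Euclidean space has a subgradient at every point. -/
lemma exists_subgradient_aux {m : ℕ} (f : EuclideanSpace ℝ (Fin m) → ℝ)
    (hf : ConvexOn ℝ Set.univ f) (y : EuclideanSpace ℝ (Fin m)) :
    ∃ ξ : EuclideanSpace ℝ (Fin m), ∀ z, f z - f y ≥ ⟪ξ, z - y⟫ := by
  have hcont : Continuous f := by
    exact continuousOn_univ.mp (hf.continuousOn isOpen_univ)
  set S : Set (EuclideanSpace ℝ (Fin m) × ℝ) := {p | f p.1 < p.2} with hS
  have hopen : IsOpen S := isOpen_lt (hcont.comp continuous_fst) continuous_snd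
  have hconv : Convex ℝ S := by
    rintro ⟨p1, p2⟩ hp ⟨q1, q2⟩ hq s t hs ht hst
    simp only [hS, Set.mem_setOf_eq] at hp hq ⊢
    rcases hs.eq_or_lt with rfl | hs'
    · have : t = 1 := by linarith
      subst this; simpa using hq
    rcases ht.eq_or_lt with rfl | ht'
    · have : s = 1 := by linarith
      subst this; simpa using hp
    calc f (s • p1 + t • q1) ≤ s * f p1 + t * f q1 :=
          hf.2 (Set.mem_univ _) (Set.mem_univ _) hs ht hst
      _ < s * p2 + t * q2 := by
          apply add_lt_add
          · exact mul_lt_mul_of_pos_left hp hs'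
          · exact mul_lt_mul_of_pos_left hq ht'
  have hyS : (y, f y) ∉ S := by simp [hS]
  obtain ⟨L, hL⟩ := geometric_hahn_banach_open_point hconv hopen hyS
  set c : ℝ := L (0, 1) with hcdef
  have hLrw : ∀ (z : EuclideanSpace ℝ (Fin m)) (r : ℝ), L (z, r) = L (z, 0) + r * c := by
    intro z r
    have h1 : (z, r) = (z, (0:ℝ)) + r • ((0 : EuclideanSpace ℝ (Fin m)), (1:ℝ)) := by
      simp [Prod.ext_iff]
    rw [h1, map_add, map_smul, smul_eq_mul]
  have hc : c < 0 := by
    have h := hL (y, f y + 1) (by simp [hS])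
    rw [hLrw y (f y + 1), hLrw y (f y)] at h
    linarith
  have key : ∀ z, L (z, 0) + f z * c ≤ L (y, 0) + f y * c := by
    intro z
    have h2 : ∀ ε : ℝ, 0 < ε → L (z, 0) + f z * c + ε * c < L (y, 0) + f y * c := by
      intro ε hε
      have h := hL (z, f z + ε) (by simp [hS, hε])
      rw [hLrw z (f z + ε), hLrw y (f y)] at h
      linarith [h]
    by_contra h
    push_neg at h
    set d := (L (z, 0) + f z * c) - (L (y, 0) + f y * c) with hd
    have hd0 : 0 < d := by simp only [hd]; linarith
    have h3 := h2 (d / (2 * -c)) (div_pos hd0 (by linarith))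
    have hc' : c ≠ 0 := ne_of_lt hc
    have hε : (d / (2 * -c)) * c = -(d / 2) := by
      field_simp
    rw [hε] at h3
    linarith
  refine ⟨(InnerProductSpace.toDual ℝ _).symm
      ((-c)⁻¹ • (L.comp (ContinuousLinearMap.inl ℝ _ ℝ))), fun z => ?_⟩
  rw [ge_iff_le, InnerProductSpace.toDual_symm_apply]
  have hap : ((-c)⁻¹ • (L.comp (ContinuousLinearMap.inl ℝ _ ℝ))) (z - y)
      = (-c)⁻¹ * (L (z, 0) - L (y, 0)) := by
    have h4 : ((z - y : EuclideanSpace ℝ (Fin m)), (0:ℝ)) =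
        (z, (0:ℝ)) - (y, (0:ℝ)) := by simp [Prod.ext_iff]
    simp only [ContinuousLinearMap.smul_apply, ContinuousLinearMap.comp_apply,
      ContinuousLinearMap.inl_apply, smul_eq_mul]
    rw [h4, map_sub]
  rw [hap]
  rw [inv_mul_le_iff₀ (by linarith : (0:ℝ) < -c)]
  have := key z
  nlinarith [key z]

/-- Key step for recession cones of complement components: if a convex `f` is affine with
gradient `a` on a nonempty open convex set `C`, all subgradients of `f` lie in a compact
convex set `N ∋ a`, `v` is in the normal cone to `N` at `a`, and `f ≥ ⟨a,·⟩ + b` globally,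
then `f` stays equal to `⟨a,·⟩ + b` along every ray `x + t v`, `x ∈ C`, `t ≥ 0`. -/
theorem stmt_17 {m : ℕ} (f : EuclideanSpace ℝ (Fin m) → ℝ)
    (hf : ConvexOn ℝ Set.univ f)
    (C : Set (EuclideanSpace ℝ (Fin m)))
    (hCne : C.Nonempty) (hCo : IsOpen C) (hCc : Convex ℝ C)
    (a : EuclideanSpace ℝ (Fin m)) (b : ℝ)
    (haff : ∀ x ∈ C, f x = ⟪a, x⟫ + b)
    (N : Set (EuclideanSpace ℝ (Fin m)))
    (hNcomp : IsCompact N) (hNconv : Convex ℝ N) (haN : a ∈ N)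
    (hsub : ∀ y ξ, (∀ z, f z - f y ≥ ⟪ξ, z - y⟫) → ξ ∈ N)
    (v : EuclideanSpace ℝ (Fin m))
    (hv : ∀ ξ ∈ N, ⟪ξ, v⟫ ≤ ⟪a, v⟫)
    (hlb : ∀ y, f y ≥ ⟪a, y⟫ + b) :
    ∀ x ∈ C, ∀ t : ℝ, 0 ≤ t → f (x + t • v) = ⟪a, x + t • v⟫ + b := by
  intro x hx t ht
  obtain ⟨ξ, hξ⟩ := exists_subgradient_aux f hf (x + t • v)
  have hξN : ξ ∈ N := hsub _ ξ hξ
  have h1 := hξ x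
  have hin1 : ⟪ξ, x - (x + t • v)⟫ = -(t * ⟪ξ, v⟫) := by
    have : x - (x + t • v) = -(t • v) := by abel
    rw [this, inner_neg_right, real_inner_smul_right]
  rw [hin1] at h1
  have h2 : ⟪ξ, v⟫ ≤ ⟪a, v⟫ := hv ξ hξN
  have hfx : f x = ⟪a, x⟫ + b := haff x hx
  have hexp : ⟪a, x + t • v⟫ = ⟪a, x⟫ + t * ⟪a, v⟫ := by
    rw [inner_add_right, real_inner_smul_right]
  have hlow := hlb (x + t • v)
  rw [hexp] at hlow ⊢
  nlinarith [mul_le_mul_of_nonneg_left h2 ht]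
end
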